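/- Let (p_t, P_T) be a drift process and let A, B ∈ ℬ be disjoint alternating sets. Then A and its complement A^C are alternating sets, or B and its complement B^C are alternating sets. -/

import Mathlib

open MeasureTheory ProbabilityTheory

/-- The `𝔗`-invariant model of a drift process over a non-null set `A`:
the probability measure `p_A(D) = P_T(A)⁻¹ ∫_A p_t(D) dP_T(t)`. -/
noncomputable def invariantModel {𝔗 𝔛 : Type*} [MeasurableSpace 𝔗] [MeasurableSpace 𝔛]
    (p : Kernel 𝔗 𝔛) (PT : Measure 𝔗) (A : Set 𝔗) : Measure 𝔛 :=
  (PT A)⁻¹ • (PT.restrict A).bind (fun t => p t)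

/-- Two measurable non-null sets `A, B` are *alternating* if `p_A ≠ p_B`. -/
def AlternatingSets {𝔗 𝔛 : Type*} [MeasurableSpace 𝔗] [MeasurableSpace 𝔛]
    (p : Kernel 𝔗 𝔛) (PT : Measure 𝔗) (A B : Set 𝔗) : Prop :=
  MeasurableSet A ∧ MeasurableSet B ∧ 0 < PT A ∧ 0 < PT B ∧
    invariantModel p PT A ≠ invariantModel p PT B

lemma invariantModel_eq_total {𝔗 𝔛 : Type*} [MeasurableSpace 𝔗] [MeasurableSpace 𝔛]
    (p : Kernel 𝔗 𝔛) [IsMarkovKernel p] (PT : Measure 𝔗) [IsProbabilityMeasure PT]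
    {A : Set 𝔗} (hA : MeasurableSet A) (h0 : 0 < PT A) (h0c : 0 < PT Aᶜ)
    (heq : invariantModel p PT A = invariantModel p PT Aᶜ)
    {D : Set 𝔛} (hD : MeasurableSet D) :
    invariantModel p PT A D = ∫⁻ t, p t D ∂PT := by
  have hmeas : Measurable fun t => p t D := p.measurable_coe hD
  have happ : ∀ S : Set 𝔗, invariantModel p PT S D
      = (PT S)⁻¹ * ∫⁻ t in S, p t D ∂PT := by
    intro S
    simp [invariantModel, Measure.bind_apply hD p.measurable.aemeasurable]
  have ha : PT A ≠ 0 := h0.ne'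
  have ha' : PT A ≠ ⊤ := (measure_lt_top PT A).ne
  have hac : PT Aᶜ ≠ 0 := h0c.ne'
  have hac' : PT Aᶜ ≠ ⊤ := (measure_lt_top PT Aᶜ).ne
  set x := invariantModel p PT A D with hx
  have hIA : ∫⁻ t in A, p t D ∂PT = PT A * x := by
    rw [hx, happ, ← mul_assoc, ENNReal.mul_inv_cancel ha ha', one_mul]
  have hIAc : ∫⁻ t in Aᶜ, p t D ∂PT = PT Aᶜ * x := by
    rw [hx, heq, happ, ← mul_assoc, ENNReal.mul_inv_cancel hac hac', one_mul]
  have htot : ∫⁻ t, p t D ∂PT = (PT A + PT Aᶜ) * x := by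
    rw [← lintegral_add_compl (fun t => p t D) hA, hIA, hIAc, add_mul]
  rw [htot, measure_add_measure_compl hA, measure_univ, one_mul]

/-- If `A, B` are disjoint alternating sets, then `A, Aᶜ` are alternating
or `B, Bᶜ` are alternating. -/
theorem alternating_compl_of_alternating_disjoint {𝔗 𝔛 : Type*} [MeasurableSpace 𝔗]
    [MeasurableSpace 𝔛] (p : Kernel 𝔗 𝔛) [IsMarkovKernel p]
    (PT : Measure 𝔗) [IsProbabilityMeasure PT]
    {A B : Set 𝔗} (hdisj : Disjoint A B) (hAB : AlternatingSets p PT A B) :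
    AlternatingSets p PT A Aᶜ ∨ AlternatingSets p PT B Bᶜ := by
  obtain ⟨hAm, hBm, hA0, hB0, hne⟩ := hAB
  have hBsubAc : B ⊆ Aᶜ := Set.subset_compl_iff_disjoint_left.mpr hdisj
  have hAsubBc : A ⊆ Bᶜ := Set.subset_compl_iff_disjoint_right.mpr hdisj
  have hAc0 : 0 < PT Aᶜ := lt_of_lt_of_le hB0 (measure_mono hBsubAc)
  have hBc0 : 0 < PT Bᶜ := lt_of_lt_of_le hA0 (measure_mono hAsubBc)
  by_contra hcon
  push_neg at hcon
  obtain ⟨h1, h2⟩ := hcon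
  have e1 : invariantModel p PT A = invariantModel p PT Aᶜ := by
    by_contra h
    exact h1 ⟨hAm, hAm.compl, hA0, hAc0, h⟩
  have e2 : invariantModel p PT B = invariantModel p PT Bᶜ := by
    by_contra h
    exact h2 ⟨hBm, hBm.compl, hB0, hBc0, h⟩
  apply hne
  ext D hD
  rw [invariantModel_eq_total p PT hAm hA0 hAc0 e1 hD,
    invariantModel_eq_total p PT hBm hB0 hBc0 e2 hD]
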